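/- Assume additionally ∑_{k=1}^∞ c_k < +∞ and fix ξ ∈ [0, 1). Then for every integer k ≥ 2 and every ε > 0 there exists A₀ > 0 such that for all a > A₀: the function ℓ_a has at least one real zero in (−γ_k, −γ_{k−1}), and every real zero of ℓ_a lying in (−γ_k, −γ_{k−1}) belongs to (−γ_k, −γ_k + ε). In other words, the real zeros of ℓ_a in the interval (−γ_k, −γ_{k−1}) converge to −γ_k as a → +∞. -/

import Mathlib

open Set

private lemma aux_summable (c γs : ℕ → ℝ) (hc : ∀ j, 0 < c j) (hcsum : Summable c)
    (k : ℕ) (x e : ℝ) (he : 0 < e) (hlow : ∀ j, k ≤ j → e ≤ x + γs j) :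
    Summable (fun j => c j / (x + γs j)) := by
  rw [← summable_nat_add_iff k]
  apply Summable.of_norm_bounded (g := fun n => c (n + k) / e)
    (((summable_nat_add_iff k).2 hcsum).div_const e)
  intro n
  have h := hlow (n + k) (Nat.le_add_left _ _)
  rw [Real.norm_eq_abs, abs_div, abs_of_pos (hc _), abs_of_pos (lt_of_lt_of_le he h)]
  gcongr
  exact (hc _).le

private lemma aux_summable_ite {f : ℕ → ℝ} (hf : Summable f) (k : ℕ) :
    Summable (fun j => if j = k then (0:ℝ) else f j) := by
  rw [← summable_nat_add_iff (k+1)]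
  refine ((summable_nat_add_iff (k+1)).2 hf).congr fun n => ?_
  rw [if_neg (by omega)]

private lemma aux_tsum_le (c γs : ℕ → ℝ) (hc : ∀ j, 0 < c j) (hcsum : Summable c)
    (k : ℕ) (x e : ℝ) (he : 0 < e) (hlow : ∀ j, k ≤ j → e ≤ x + γs j)
    (hneg : ∀ j, j < k → x + γs j < 0) :
    ∑' j, c j / (x + γs j) ≤ (∑' j, c j) / e := by
  rw [← tsum_div_const]
  apply Summable.tsum_le_tsum _ (aux_summable c γs hc hcsum k x e he hlow) (hcsum.div_const e)
  intro j
  rcases lt_or_ge j k with hj | hj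
  · exact le_trans (le_of_lt (div_neg_of_pos_of_neg (hc j) (hneg j hj))) (div_nonneg (hc j).le he.le)
  · gcongr
    exacts [(hc j).le, hlow j hj]

private lemma aux_tsum_ge (c γs : ℕ → ℝ) (hc : ∀ j, 0 < c j) (hcsum : Summable c)
    (k : ℕ) (x δ δ₀ : ℝ) (hδ : 0 < δ) (hδ₀ : 0 < δ₀)
    (hlow : ∀ j, k ≤ j → δ ≤ x + γs j) (hneg : ∀ j, j < k → x + γs j ≤ -δ₀) :
    c k / (x + γs k) - (∑' j, c j) / δ₀ ≤ ∑' j, c j / (x + γs j) := by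
  have hf := aux_summable c γs hc hcsum k x δ hδ hlow
  rw [Summable.tsum_eq_add_tsum_ite hf k]
  have h2 : Summable (fun j => if j = k then (0:ℝ) else c j / (x + γs j)) :=
    aux_summable_ite hf k
  have h3 : ∑' j, -(c j / δ₀) ≤ ∑' j, (if j = k then (0:ℝ) else c j / (x + γs j)) := by
    apply Summable.tsum_le_tsum _ ((hcsum.div_const δ₀).neg) h2
    intro j
    by_cases hj : j = k
    · rw [if_pos hj]
      have : 0 < c j / δ₀ := div_pos (hc j) hδ₀
      linarith
    · rw [if_neg hj]
      rcases lt_or_ge j k with h | h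
      · have hx := hneg j h
        have h1 : c j / (-(x + γs j)) ≤ c j / δ₀ := by
          gcongr
          exacts [(hc j).le, by linarith]
        rw [div_neg] at h1
        linarith
      · have h0 : 0 < c j / (x + γs j) :=
          div_pos (hc j) (lt_of_lt_of_le hδ (hlow j h))
        have : 0 < c j / δ₀ := div_pos (hc j) hδ₀
        linarith
  have h4 : ∑' j, -(c j / δ₀) = -((∑' j, c j) / δ₀) := by
    rw [tsum_neg, tsum_div_const]
  linarith

/-- Assume additionally `∑ₖ c k < ∞` and fix `ξ ∈ [0, 1)`. Then for every
integer `k ≥ 2` (here `k ≥ 1`, `0`-based) and every `ε > 0` there is `A₀ > 0` such that for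
all `a > A₀`: `ℓ_a` has at least one real zero in `(-γ k, -γ (k-1))`, and every real zero of
`ℓ_a` in `(-γ k, -γ (k-1))` lies in `(-γ k, -γ k + ε)`; i.e. the real zeros of `ℓ_a` in this
interval converge to `-γ k` as `a → +∞`.
(Indexing is `0`-based: `c 0, γ 0` correspond to `c_1, γ_1`.) -/
theorem stmt_13
    (c γs : ℕ → ℝ)
    (hc : ∀ j, 0 < c j)
    (hγ0 : 0 < γs 0)
    (hγmono : StrictMono γs)
    (hγtop : Filter.Tendsto γs Filter.atTop Filter.atTop)
    (hSsum : Summable fun j => c j / γs j)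
    (hS : (∑' j, c j / γs j) < 1)
    (hcsum : Summable c)
    (ξ : ℝ) (hξ0 : 0 ≤ ξ) (hξ1 : ξ < 1)
    (ℓ : ℝ → ℝ → ℝ)
    (hℓ : ∀ a x : ℝ, ℓ a x = x ^ 2 + a ^ 2 - a ^ (2 * ξ) * ∑' j, c j / (x + γs j)) :
    ∀ k : ℕ, 1 ≤ k → ∀ ε : ℝ, 0 < ε → ∃ A₀ : ℝ, 0 < A₀ ∧ ∀ a : ℝ, A₀ < a →
      (∃ μ ∈ Set.Ioo (-γs k) (-γs (k - 1)), ℓ a μ = 0) ∧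
      (∀ μ ∈ Set.Ioo (-γs k) (-γs (k - 1)), ℓ a μ = 0 → μ < -γs k + ε) := by
  classical
  intro k hk ε hε
  have hT0 : 0 ≤ ∑' j, c j := tsum_nonneg fun j => (hc j).le
  have hγlt : γs (k - 1) < γs k := hγmono (by omega)
  have hγk10 : 0 < γs (k - 1) := lt_of_lt_of_le hγ0 (hγmono.monotone (Nat.zero_le _))
  have hγk0 : 0 < γs k := lt_trans hγk10 hγlt
  set δ₀ : ℝ := (γs k - γs (k - 1)) / 2 with hδ₀def
  have hδ₀ : 0 < δ₀ := by rw [hδ₀def]; linarith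
  set ε' : ℝ := min ε δ₀ with hε'def
  have hε' : 0 < ε' := lt_min hε hδ₀
  have hε'δ₀ : ε' ≤ δ₀ := min_le_right _ _
  set p : ℝ := 2 - 2 * ξ with hpdef
  have hp : 0 < p := by rw [hpdef]; linarith
  set C : ℝ := (∑' j, c j) / δ₀ with hCdef
  set M : ℝ := (∑' j, c j) / ε' with hMdef
  have hC0 : 0 ≤ C := div_nonneg hT0 hδ₀.le
  have hM0 : 0 ≤ M := div_nonneg hT0 hε'.le
  set K : ℝ := max M (c k / ε') + 1 with hKdef
  clear_value δ₀ ε' p C M K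
  have hK : 0 < K := by
    have h1 : (0:ℝ) ≤ max M (c k / ε') := le_trans hM0 (le_max_left _ _)
    rw [hKdef]; linarith
  refine ⟨max 1 (K ^ (1 / p)), lt_of_lt_of_le one_pos (le_max_left _ _), ?_⟩
  intro a ha
  have ha1 : 1 < a := lt_of_le_of_lt (le_max_left _ _) ha
  have ha0 : 0 < a := lt_trans one_pos ha1
  have haK : K ^ (1 / p) < a := lt_of_le_of_lt (le_max_right _ _) ha
  have hKa : K < a ^ p := by
    have h1 : (K ^ (1 / p)) ^ p < a ^ p :=
      Real.rpow_lt_rpow (Real.rpow_nonneg hK.le _) haK hp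
    rwa [← Real.rpow_mul hK.le, one_div_mul_cancel hp.ne', Real.rpow_one] at h1
  have hMa : M < a ^ p := by
    have h1 : M ≤ max M (c k / ε') := le_max_left _ _
    rw [hKdef] at hKa; linarith
  have hcka : c k / ε' < a ^ p := by
    have h1 : c k / ε' ≤ max M (c k / ε') := le_max_right _ _
    rw [hKdef] at hKa; linarith
  have haξ : 0 < a ^ (2 * ξ) := Real.rpow_pos_of_pos ha0 _
  have hap : 0 < a ^ p := Real.rpow_pos_of_pos ha0 _
  have hsplit : a ^ 2 = a ^ (2 * ξ) * a ^ p := by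
    rw [← Real.rpow_add ha0, hpdef]
    norm_num
  have ha2 : (0:ℝ) < a ^ 2 := by positivity
  set D : ℝ := γs k ^ 2 + a ^ 2 + (1 + C) * a ^ (2 * ξ) with hDdef
  have hD : 0 < D := by
    have h1 : 0 < (1 + C) * a ^ (2 * ξ) := mul_pos (by linarith) haξ
    rw [hDdef]; linarith [sq_nonneg (γs k)]
  set δ : ℝ := c k * a ^ (2 * ξ) / D with hδdef
  clear_value D δ
  have hδ : 0 < δ := by rw [hδdef]; exact div_pos (mul_pos (hc k) haξ) hD
  have hδε' : δ < ε' := by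
    have h1 : δ ≤ c k * a ^ (2 * ξ) / a ^ 2 := by
      rw [hδdef]
      gcongr
      · exact (mul_pos (hc k) haξ).le
      · have h2 : 0 < (1 + C) * a ^ (2 * ξ) := mul_pos (by linarith) haξ
        rw [hDdef]; linarith [sq_nonneg (γs k)]
    have h2 : c k * a ^ (2 * ξ) / a ^ 2 = c k / a ^ p := by
      rw [hsplit]
      field_simp
    have h3 : c k / a ^ p < ε' := by
      rw [div_lt_iff₀ hap]
      have h4 := (div_lt_iff₀ hε').1 hcka
      linarith [mul_comm (a ^ p) ε']
    linarith
  have hδδ₀ : δ < δ₀ := lt_of_lt_of_le hδε' hε'δ₀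
  set x₁ : ℝ := -γs k + δ with hx₁def
  set x₂ : ℝ := -γs k + ε' with hx₂def
  clear_value x₁ x₂
  have hx₁₂ : x₁ < x₂ := by rw [hx₁def, hx₂def]; linarith
  have hx₂lt : x₂ < -γs (k - 1) := by rw [hx₂def, hδ₀def] at *; linarith
  have hγmon : ∀ j, j < k → γs j ≤ γs (k - 1) := fun j hj => hγmono.monotone (by omega)
  have hγk : ∀ j, k ≤ j → γs k ≤ γs j := fun j hj => hγmono.monotone hj
  -- positivity on the right region
  have hposR : ∀ x, -γs k + ε' ≤ x → x < -γs (k - 1) → 0 < ℓ a x := by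
    intro x hx1 hx2
    have hlow : ∀ j, k ≤ j → ε' ≤ x + γs j := fun j hj => by
      have := hγk j hj; linarith
    have hneg : ∀ j, j < k → x + γs j < 0 := fun j hj => by
      have := hγmon j hj; linarith
    have hub := aux_tsum_le c γs hc hcsum k x ε' hε' hlow hneg
    rw [hℓ a x]
    have hb1 : a ^ (2 * ξ) * ∑' j, c j / (x + γs j) ≤ a ^ (2 * ξ) * M :=
      mul_le_mul_of_nonneg_left (by rw [hMdef]; exact hub) haξ.le
    have hb2 : a ^ (2 * ξ) * M < a ^ 2 := by
      rw [hsplit]; exact mul_lt_mul_of_pos_left hMa haξ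
    linarith [hb1, hb2, sq_nonneg x]
  -- ℓ a x₁ < 0
  have hx₁k : x₁ + γs k = δ := by rw [hx₁def]; ring
  have hlow₁ : ∀ j, k ≤ j → δ ≤ x₁ + γs j := fun j hj => by
    have := hγk j hj; rw [hx₁def]; linarith
  have hneg₁ : ∀ j, j < k → x₁ + γs j ≤ -δ₀ := fun j hj => by
    have h1 := hγmon j hj
    rw [hx₁def]; rw [hδ₀def] at *; linarith
  have hlb := aux_tsum_ge c γs hc hcsum k x₁ δ δ₀ hδ hδ₀ hlow₁ hneg₁
  rw [hx₁k] at hlb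
  have hkey : a ^ (2 * ξ) * (c k / δ) = D := by
    have h1 : δ * D = c k * a ^ (2 * ξ) := by
      rw [hδdef]; field_simp
    have h2 : c k / δ = D / a ^ (2 * ξ) := by
      rw [div_eq_div_iff hδ.ne' haξ.ne']
      linarith [h1, mul_comm δ D]
    rw [h2, mul_div_cancel₀ _ haξ.ne']
  have hℓx₁ : ℓ a x₁ < 0 := by
    rw [hℓ a x₁]
    have h5 : a ^ (2 * ξ) * (c k / δ - C) ≤ a ^ (2 * ξ) * ∑' j, c j / (x₁ + γs j) :=
      mul_le_mul_of_nonneg_left (by rw [hCdef]; exact hlb) haξ.le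
    rw [mul_sub, hkey] at h5
    have hx₁lt0 : x₁ < 0 := by
      have : -γs (k-1) < 0 := by linarith
      linarith [hx₁₂, hx₂lt]
    have hx₁gt : -γs k < x₁ := by rw [hx₁def]; linarith
    have hx₁sq : x₁ ^ 2 < γs k ^ 2 := sq_lt_sq' hx₁gt (by linarith)
    rw [hDdef] at h5
    have hexp : (1 + C) * a ^ (2 * ξ) - a ^ (2 * ξ) * C = a ^ (2 * ξ) := by ring
    linarith [h5, hexp, hx₁sq, haξ]
  have hℓx₂ : 0 < ℓ a x₂ := hposR x₂ hx₂def.ge hx₂lt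
  -- continuity on Icc x₁ x₂
  have hmem : ∀ x ∈ Icc x₁ x₂, (∀ j, j < k → x + γs j ≤ -δ₀) ∧ (∀ j, k ≤ j → δ ≤ x + γs j) := by
    intro x hx
    obtain ⟨hxl, hxr⟩ := hx
    constructor
    · intro j hj
      have h1 := hγmon j hj
      rw [hx₂def] at hxr; rw [hδ₀def] at *; linarith
    · intro j hj
      have h1 := hγk j hj
      rw [hx₁def] at hxl; linarith
  have hm : 0 < min δ δ₀ := lt_min hδ hδ₀
  have hcont : ContinuousOn (ℓ a) (Icc x₁ x₂) := by
    have hcont0 : ContinuousOn (fun x => ∑' j, c j / (x + γs j)) (Icc x₁ x₂) := by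
      apply continuousOn_tsum (u := fun j => c j / min δ δ₀)
      · intro i
        apply ContinuousOn.div continuousOn_const (by fun_prop)
        intro x hx
        rcases lt_or_ge i k with hi | hi
        · exact ne_of_lt (lt_of_le_of_lt ((hmem x hx).1 i hi) (by linarith))
        · exact ne_of_gt (lt_of_lt_of_le hδ ((hmem x hx).2 i hi))
      · exact hcsum.div_const _
      · intro n x hx
        rw [Real.norm_eq_abs, abs_div, abs_of_pos (hc n)]
        have habs : min δ δ₀ ≤ |x + γs n| := by
          rcases lt_or_ge n k with hi | hi
          · have h2 := (hmem x hx).1 n hi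
            rw [abs_of_nonpos (by linarith)]
            calc min δ δ₀ ≤ δ₀ := min_le_right _ _
              _ ≤ -(x + γs n) := by linarith
          · have h2 := (hmem x hx).2 n hi
            rw [abs_of_pos (lt_of_lt_of_le hδ h2)]
            calc min δ δ₀ ≤ δ := min_le_left _ _
              _ ≤ x + γs n := h2
        gcongr
        exact (hc n).le
    have hcont1 : ContinuousOn
        (fun x => x ^ 2 + a ^ 2 - a ^ (2 * ξ) * ∑' j, c j / (x + γs j)) (Icc x₁ x₂) := by
      apply ContinuousOn.sub (by fun_prop) (ContinuousOn.mul continuousOn_const hcont0)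
    exact hcont1.congr fun x _ => hℓ a x
  obtain ⟨μ, hμmem, hμ⟩ := intermediate_value_Icc hx₁₂.le hcont ⟨hℓx₁.le, hℓx₂.le⟩
  constructor
  · refine ⟨μ, ⟨?_, ?_⟩, hμ⟩
    · have : -γs k < x₁ := by rw [hx₁def]; linarith
      exact lt_of_lt_of_le this hμmem.1
    · exact lt_of_le_of_lt hμmem.2 hx₂lt
  · intro μ' hμ' h0
    by_contra hcon
    push_neg at hcon
    have hge : -γs k + ε' ≤ μ' := by
      have := min_le_left ε δ₀
      rw [hε'def]; linarith
    exact absurd h0 (ne_of_gt (hposR μ' hge hμ'.2))
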